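/- Under the standing hypotheses, the subrings of invariants R^α and T^β are isomorphic as rings; an isomorphism R^α → T^β is given by x ↦ Σ_{e∈G₀} ψ_e(x), where for each e ∈ G₀ with X_e = {h ∈ G : r(h) = e} enumerated as {g_{1,e} = e, g_{2,e}, …, g_{n_e,e}}, ψ_e : T → E_e is the ring homomorphism ψ_e(a) = Σ_{1≤l≤n_e} Σ_{i_1≤…≤i_l} (−1)^{l+1} β_{g_{i_1,e}}(1_{d(g_{i_1,e})})⋯β_{g_{i_l,e}}(1_{d(g_{i_l,e})})·β_{g_{i_l,e}}(a_{d(g_{i_l,e})}); the inverse isomorphism T^β → R^α is multiplication by 1_R. -/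

import Mathlib

universe u

/-- A groupoid in the algebraic sense of Lawson: a non-empty set `G` with a
partially defined binary operation (here modeled by a total operation `mul`
whose value is only constrained when it is defined, i.e. when `d g = r h`),
an inversion `inv`, and domain/range maps `d`, `r`. -/
structure AlgGroupoid (G : Type u) where
  mul : G → G → G
  inv : G → G
  d : G → G
  r : G → G
  mul_assoc' : ∀ g h l, d g = r h → d h = r l → mul (mul g h) l = mul g (mul h l)
  mul_d : ∀ g, mul g (d g) = g
  r_mul : ∀ g, mul (r g) g = g
  inv_mul : ∀ g, mul (inv g) g = d g
  mul_inv : ∀ g, mul g (inv g) = r g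
  d_mul : ∀ g h, d g = r h → d (mul g h) = d h
  r_mul' : ∀ g h, d g = r h → r (mul g h) = r g
  d_inv : ∀ g, d (inv g) = r g
  r_inv : ∀ g, r (inv g) = d g
  inv_inv : ∀ g, inv (inv g) = g
  d_d : ∀ g, d (d g) = d g
  r_d : ∀ g, r (d g) = d g
  d_r : ∀ g, d (r g) = r g
  r_r : ∀ g, r (r g) = r g

/-- `e` is an identity element of the groupoid `𝔾`, i.e. an element of `G₀`. -/
def AlgGroupoid.isId {G : Type u} (𝔾 : AlgGroupoid G) (e : G) : Prop := 𝔾.d e = e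

instance {G : Type u} [DecidableEq G] (𝔾 : AlgGroupoid G) (e : G) : Decidable (𝔾.isId e) :=
  inferInstanceAs (Decidable (𝔾.d e = e))

/-- `D` is a two-sided ideal of `E` (both being subsets of an ambient
non-unital ring `T`). -/
structure IsIdealIn {T : Type u} [NonUnitalRing T] (D E : Set T) : Prop where
  subset : D ⊆ E
  zero_mem : (0 : T) ∈ D
  add_mem : ∀ ⦃x y : T⦄, x ∈ D → y ∈ D → x + y ∈ D
  neg_mem : ∀ ⦃x : T⦄, x ∈ D → -x ∈ D
  mul_mem_left : ∀ ⦃x y : T⦄, x ∈ E → y ∈ D → x * y ∈ D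
  mul_mem_right : ∀ ⦃x y : T⦄, x ∈ D → y ∈ E → x * y ∈ D

/-- `u` is a (two-sided) multiplicative identity element of the subset `D`. -/
def IsIdentityElem {T : Type u} [NonUnitalRing T] (u : T) (D : Set T) : Prop :=
  u ∈ D ∧ ∀ x ∈ D, u * x = x ∧ x * u = x

/-- A partial action `α = ({D_g}, {α_g})` of a groupoid `𝔾` on the ring whose
carrier is the subset `R` of the ambient non-unital ring `T` (take
`R = Set.univ` for a partial action on `T` itself).  For each `g`, `D (r g)`
is an ideal of `R`, `D g` is an ideal of `D (r g)` and `act g` restricts to a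
ring isomorphism from `D (inv g)` onto `D g`; moreover `act e` is the identity
of `D e` for identities `e`, and for composable `g, h` the map `act (mul g h)`
extends `act g ∘ act h` (whose domain is `(act h)⁻¹ (D (inv g) ∩ D h)`). -/
structure PartialGroupoidAction {G : Type u} (𝔾 : AlgGroupoid G) (T : Type u)
    [NonUnitalRing T] (R : Set T) where
  D : G → Set T
  act : G → T → T
  ideal_r : ∀ g, IsIdealIn (D (𝔾.r g)) R
  ideal : ∀ g, IsIdealIn (D g) (D (𝔾.r g))
  bijOn : ∀ g, Set.BijOn (act g) (D (𝔾.inv g)) (D g)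
  map_add : ∀ g, ∀ x ∈ D (𝔾.inv g), ∀ y ∈ D (𝔾.inv g), act g (x + y) = act g x + act g y
  map_mul : ∀ g, ∀ x ∈ D (𝔾.inv g), ∀ y ∈ D (𝔾.inv g), act g (x * y) = act g x * act g y
  act_id : ∀ e, 𝔾.isId e → ∀ x ∈ D e, act e x = x
  dom_cond : ∀ g h, 𝔾.d g = 𝔾.r h → ∀ x ∈ D (𝔾.inv h), act h x ∈ D (𝔾.inv g) →
    x ∈ D (𝔾.inv (𝔾.mul g h))
  comp_cond : ∀ g h, 𝔾.d g = 𝔾.r h → ∀ x ∈ D (𝔾.inv h), act h x ∈ D (𝔾.inv g) →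
    act g (act h x) = act (𝔾.mul g h) x

/-- The partial action `α` is global if, for all composable `g, h`, the
composite `α_g ∘ α_h` (taken on its largest possible domain) coincides with
`α_{gh}`; since both maps always agree on the domain of the composite, this
amounts to the equality of the two domains. -/
def PartialGroupoidAction.IsGlobal {G : Type u} {𝔾 : AlgGroupoid G} {T : Type u}
    [NonUnitalRing T] {R : Set T} (α : PartialGroupoidAction 𝔾 T R) : Prop :=
  ∀ g h, 𝔾.d g = 𝔾.r h →
    {x | x ∈ α.D (𝔾.inv h) ∧ α.act h x ∈ α.D (𝔾.inv g)} = α.D (𝔾.inv (𝔾.mul g h))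
private def glueL {G : Type u} {T : Type u} [Ring T] (v u : G → T) (onee : T) :
    List G → T
  | [] => 0
  | h :: t => v h + glueL v u onee t * (onee - u h)

private lemma glueL_mem {G : Type u} {T : Type u} [Ring T] (v u : G → T) (onee : T)
    (S : Set T) (h0 : (0:T) ∈ S) (hadd : ∀ a ∈ S, ∀ b ∈ S, a + b ∈ S)
    (hmul : ∀ a ∈ S, ∀ t : T, a * t ∈ S) :
    ∀ L : List G, (∀ h ∈ L, v h ∈ S) → glueL v u onee L ∈ S := by
  intro L
  induction L with
  | nil => intro _; exact h0
  | cons h t ih =>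
    intro hv
    exact hadd _ (hv h List.mem_cons_self) _
      (hmul _ (ih fun k hk => hv k (List.mem_cons_of_mem h hk)) _)

private lemma glueL_spec {G : Type u} {T : Type u} [Ring T] (v u : G → T) (onee : T)
    (hucomm : ∀ k (t : T), u k * t = t * u k) :
    ∀ L : List G,
      (∀ k ∈ L, onee * u k = u k) → (∀ k ∈ L, u k * u k = u k) →
      (∀ k ∈ L, v k * u k = v k) → (∀ k ∈ L, v k * onee = v k) →
      (∀ h ∈ L, ∀ k ∈ L, v h * u k = v k * u h) →
      ∀ k ∈ L, glueL v u onee L * u k = v k := by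
  intro L
  induction L with
  | nil => intro _ _ _ _ _ k hk; exact absurd hk List.not_mem_nil
  | cons h t ih =>
    intro h1 h2 h3 h4 h5 k hk
    have hmem : ∀ k ∈ t, k ∈ h :: t := fun k hk => List.mem_cons_of_mem h hk
    have hh : h ∈ h :: t := List.mem_cons_self
    show (v h + glueL v u onee t * (onee - u h)) * u k = v k
    rcases List.mem_cons.mp hk with rfl | hkt
    · -- k = h
      have : (onee - u k) * u k = 0 := by
        rw [sub_mul, h1 k hk, h2 k hk, sub_self]
      rw [add_mul, mul_assoc, this, mul_zero, add_zero, h3 k hk]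
    · -- k ∈ t
      have hcomm : (onee - u h) * u k = u k * (onee - u h) := (hucomm k _).symm
      have ihk := ih (fun k hk => h1 k (hmem k hk)) (fun k hk => h2 k (hmem k hk))
        (fun k hk => h3 k (hmem k hk)) (fun k hk => h4 k (hmem k hk))
        (fun a ha b hb => h5 a (hmem a ha) b (hmem b hb)) k hkt
      rw [add_mul, mul_assoc, hcomm, ← mul_assoc, ihk, mul_sub,
        h4 k (hmem k hkt), h5 h hh k (hmem k hkt)]
      abel


/-- **Theorem 4.6**: under the standing hypotheses (`G` finite, `β` a
globalization of `α` acting on `T = ⊕_{e ∈ G₀} E_e`, `R = T·1_R` with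
`1_R = ∑_{e ∈ G₀} 1_e`), the subrings of invariants `R^α` and `T^β` are
isomorphic as rings; the inverse isomorphism `T^β → R^α` is given by
multiplication by `1_R` (which uniquely determines the isomorphism `ψ`,
given in the paper by the explicit formula `x ↦ ∑_{e ∈ G₀} ψ_e(x)`). -/
theorem invariants_ring_iso {G : Type u} [Nonempty G] [Fintype G]
    [DecidableEq G] (𝔾 : AlgGroupoid G)
    {T : Type u} [Ring T] {Rset : Set T}
    (α : PartialGroupoidAction 𝔾 T Rset)
    (β : PartialGroupoidAction 𝔾 T (Set.univ : Set T)) (hglobal : β.IsGlobal)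
    (hDE : ∀ e, 𝔾.isId e → IsIdealIn (α.D e) (β.D e))
    (hcompatD : ∀ g, α.D g = α.D (𝔾.r g) ∩ (β.act g '' α.D (𝔾.d g)))
    (hcompatAct : ∀ g, ∀ a ∈ α.D (𝔾.inv g), β.act g a = α.act g a)
    (hspans : ∀ g, β.D g
      = ↑(AddSubgroup.closure (⋃ h ∈ {h : G | 𝔾.r h = 𝔾.r g}, β.act h '' α.D (𝔾.d h))))
    (oneD oneE : G → T)
    (honeD : ∀ g, IsIdentityElem (oneD g) (α.D g))
    (honeE : ∀ g, IsIdentityElem (oneE g) (β.D g))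
    (hcentD : ∀ g (t : T), oneD g * t = t * oneD g)
    (hcentE : ∀ g (t : T), oneE g * t = t * oneE g)
    (horthE : ∀ e f, 𝔾.isId e → 𝔾.isId f → e ≠ f → ∀ x ∈ β.D e, ∀ y ∈ β.D f, x * y = 0)
    (h1T : (1 : T) = ∑ e ∈ Finset.univ.filter (fun e => 𝔾.isId e), oneE e)
    (hRset : Rset
      = {x : T | ∃ t : T, x = t * ∑ e ∈ Finset.univ.filter (fun e => 𝔾.isId e), oneD e})
    :
    let G₀ : Finset G := Finset.univ.filter (fun e => 𝔾.isId e)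
    let oneR : T := ∑ e ∈ G₀, oneD e
    let Rα : Set T :=
      Rset ∩ {x : T | ∀ g : G, α.act g (x * oneD (𝔾.inv g)) = x * oneD g}
    let Tβ : Set T := {a : T | ∀ g : G, β.act g (a * oneE (𝔾.d g)) = a * oneE (𝔾.r g)}
    ∃ ψ : T → T,
      Set.BijOn ψ Rα Tβ ∧
      (∀ x ∈ Rα, ∀ y ∈ Rα, ψ (x + y) = ψ x + ψ y ∧ ψ (x * y) = ψ x * ψ y) ∧
      ψ oneR = 1 ∧
      (∀ x ∈ Rα, ψ x * oneR = x) ∧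
      (∀ a ∈ Tβ, ψ (a * oneR) = a) := by
  intro G₀ oneR Rα Tβ
  have hG0 : ∀ e, e ∈ G₀ ↔ 𝔾.isId e := by
    intro e; simp only [G₀, Finset.mem_filter, Finset.mem_univ, true_and]
  -- basic groupoid facts
  have hre : ∀ e, 𝔾.isId e → 𝔾.r e = e := by
    intro e he
    have h := 𝔾.r_d e
    rwa [he] at h
  have hidd : ∀ g, 𝔾.isId (𝔾.d g) := fun g => 𝔾.d_d g
  have hidr : ∀ g, 𝔾.isId (𝔾.r g) := fun g => 𝔾.d_r g
  have hinvid : ∀ e, 𝔾.isId e → 𝔾.inv e = e := by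
    intro e he
    have h1 := 𝔾.mul_d (𝔾.inv e)
    rw [𝔾.d_inv, hre e he] at h1
    rw [← h1, 𝔾.inv_mul, he]
  have hginv_cancel : ∀ g k, 𝔾.r k = 𝔾.r g → 𝔾.mul g (𝔾.mul (𝔾.inv g) k) = k := by
    intro g k hrk
    have hc1 : 𝔾.d g = 𝔾.r (𝔾.inv g) := (𝔾.r_inv g).symm
    have hc2 : 𝔾.d (𝔾.inv g) = 𝔾.r k := by rw [𝔾.d_inv, hrk]
    rw [← 𝔾.mul_assoc' g (𝔾.inv g) k hc1 hc2, 𝔾.mul_inv, ← hrk, 𝔾.r_mul]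
  have hinvmul : ∀ g h, 𝔾.d g = 𝔾.r h →
      𝔾.inv (𝔾.mul g h) = 𝔾.mul (𝔾.inv h) (𝔾.inv g) := by
    intro g h hgh
    set p := 𝔾.mul g h with hp
    set q := 𝔾.mul (𝔾.inv h) (𝔾.inv g) with hq
    have hc : 𝔾.d (𝔾.inv h) = 𝔾.r (𝔾.inv g) := by rw [𝔾.d_inv, 𝔾.r_inv, hgh]
    have hqr : 𝔾.r q = 𝔾.d h := by rw [hq, 𝔾.r_mul' _ _ hc, 𝔾.r_inv]
    have hhq : 𝔾.mul h q = 𝔾.inv g := by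
      rw [hq]
      exact hginv_cancel h (𝔾.inv g) (by rw [𝔾.r_inv, hgh])
    have hpq : 𝔾.mul p q = 𝔾.r g := by
      rw [hp, 𝔾.mul_assoc' g h q hgh (by rw [hqr]), hhq, 𝔾.mul_inv]
    have hrp : 𝔾.r p = 𝔾.r g := 𝔾.r_mul' g h hgh
    have hdp : 𝔾.d p = 𝔾.d h := 𝔾.d_mul g h hgh
    have step1 : 𝔾.inv p = 𝔾.mul (𝔾.inv p) (𝔾.mul p q) := by
      conv_lhs => rw [← 𝔾.mul_d (𝔾.inv p)]
      rw [𝔾.d_inv, hrp, ← hpq]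
    rw [step1, ← 𝔾.mul_assoc' (𝔾.inv p) p q (𝔾.d_inv p) (by rw [hdp, hqr]),
      𝔾.inv_mul, hdp, ← hqr, 𝔾.r_mul]
  -- global action facts
  have hEg : ∀ g, β.D g = β.D (𝔾.r g) := by
    intro g
    apply Set.Subset.antisymm (β.ideal g).subset
    intro y hy
    have hseteq := hglobal g (𝔾.inv g) (𝔾.r_inv g).symm
    rw [𝔾.mul_inv, hinvid (𝔾.r g) (hidr g)] at hseteq
    have : y ∈ {x | x ∈ β.D (𝔾.inv (𝔾.inv g)) ∧ β.act (𝔾.inv g) x ∈ β.D (𝔾.inv g)} := by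
      rw [hseteq]; exact hy
    have := this.1
    rwa [𝔾.inv_inv] at this
  have hIdl : ∀ g, IsIdealIn (β.D g) Set.univ := by
    intro g; rw [hEg g]; exact β.ideal_r g
  have hdom : ∀ g, β.D (𝔾.inv g) = β.D (𝔾.d g) := by
    intro g; rw [hEg (𝔾.inv g), 𝔾.r_inv]
  have hβmem : ∀ g, ∀ z ∈ β.D (𝔾.d g), β.act g z ∈ β.D (𝔾.r g) := by
    intro g z hz
    rw [← hEg g]
    exact (β.bijOn g).mapsTo (by rw [hdom g]; exact hz)
  have hβmul : ∀ g, ∀ x ∈ β.D (𝔾.d g), ∀ y ∈ β.D (𝔾.d g),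
      β.act g (x * y) = β.act g x * β.act g y := by
    intro g x hx y hy
    exact β.map_mul g x (by rw [hdom g]; exact hx) y (by rw [hdom g]; exact hy)
  have hβadd : ∀ g, ∀ x ∈ β.D (𝔾.d g), ∀ y ∈ β.D (𝔾.d g),
      β.act g (x + y) = β.act g x + β.act g y := by
    intro g x hx y hy
    exact β.map_add g x (by rw [hdom g]; exact hx) y (by rw [hdom g]; exact hy)
  have hβcomp : ∀ g h, 𝔾.d g = 𝔾.r h → ∀ z ∈ β.D (𝔾.d h),
      β.act g (β.act h z) = β.act (𝔾.mul g h) z := by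
    intro g h hgh z hz
    refine β.comp_cond g h hgh z (by rw [hdom h]; exact hz) ?_
    have := hβmem h z hz
    rw [hdom g, ← hgh] at *
    exact this
  -- membership chains
  have hDsubβ : ∀ e, 𝔾.isId e → α.D e ⊆ β.D e := fun e he => (hDE e he).subset
  have hDchain : ∀ g, α.D g ⊆ β.D (𝔾.r g) :=
    fun g => subset_trans (α.ideal g).subset (hDsubβ (𝔾.r g) (hidr g))
  have honeDmem : ∀ g, oneD g ∈ β.D (𝔾.r g) := fun g => hDchain g (honeD g).1
  have honeDd : ∀ g, oneD (𝔾.d g) ∈ β.D (𝔾.d g) := by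
    intro g
    have := honeDmem (𝔾.d g)
    rwa [hre (𝔾.d g) (hidd g)] at this
  have honeDid : ∀ e, 𝔾.isId e → oneD e ∈ β.D e := by
    intro e he
    have := honeDmem e; rwa [hre e he] at this
  -- u and v
  set u : G → T := fun h => β.act h (oneD (𝔾.d h)) with hu_def
  set v : T → G → T := fun x h => β.act h (x * oneD (𝔾.d h)) with hv_def
  have humem : ∀ h, u h ∈ β.D (𝔾.r h) := fun h => hβmem h _ (honeDd h)
  have hmulD : ∀ (t : T) {z : T} (g : G), z ∈ β.D g → t * z ∈ β.D g :=
    fun t z g hz => (hIdl g).mul_mem_left (Set.mem_univ t) hz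
  have hmulD' : ∀ (t : T) {z : T} (g : G), z ∈ β.D g → z * t ∈ β.D g :=
    fun t z g hz => (hIdl g).mul_mem_right hz (Set.mem_univ t)
  have hvmem : ∀ (x : T) h, v x h ∈ β.D (𝔾.r h) :=
    fun x h => hβmem h _ (hmulD x (𝔾.d h) (honeDd h))
  have honeD_idem : ∀ g, oneD g * oneD g = oneD g := fun g =>
    ((honeD g).2 _ (honeD g).1).1
  have hu_idem : ∀ h, u h * u h = u h := by
    intro h
    rw [hu_def]
    rw [← hβmul h _ (honeDd h) _ (honeDd h), honeD_idem]
  have hv_u : ∀ (x : T) h, v x h * u h = v x h := by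
    intro x h
    rw [hv_def, hu_def]
    rw [← hβmul h _ (hmulD x (𝔾.d h) (honeDd h)) _ (honeDd h), mul_assoc, honeD_idem]
  have hu_v : ∀ (x : T) h, u h * v x h = v x h := by
    intro x h
    rw [hv_def, hu_def]
    rw [← hβmul h _ (honeDd h) _ (hmulD x (𝔾.d h) (honeDd h))]
    congr 1
    rw [hcentD, mul_assoc, honeD_idem]
  -- Lemma L1 : oneD (r m) * u m = oneD m
  have honeL1 : ∀ m, oneD (𝔾.r m) * u m = oneD m := by
    intro m
    set z := β.act (𝔾.inv m) (oneD (𝔾.r m)) with hz_def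
    have hz : z ∈ β.D (𝔾.d m) := by
      have h1 : oneD (𝔾.r m) ∈ β.D (𝔾.d (𝔾.inv m)) := by
        rw [𝔾.d_inv]; exact honeDid (𝔾.r m) (hidr m)
      have := hβmem (𝔾.inv m) _ h1
      rwa [𝔾.r_inv] at this
    have hβz : β.act m z = oneD (𝔾.r m) := by
      rw [hz_def, hβcomp m (𝔾.inv m) (𝔾.r_inv m).symm _ (by rw [𝔾.d_inv]; exact honeDid (𝔾.r m) (hidr m)),
        𝔾.mul_inv]
      exact β.act_id (𝔾.r m) (hidr m) _ (honeDid (𝔾.r m) (hidr m))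
    have hw'eq : oneD (𝔾.r m) * u m = β.act m (z * oneD (𝔾.d m)) := by
      rw [hu_def, ← hβz, ← hβmul m z hz _ (honeDd m)]
    have hzD : z * oneD (𝔾.d m) ∈ α.D (𝔾.d m) :=
      (hDE (𝔾.d m) (hidd m)).mul_mem_left hz (honeD (𝔾.d m)).1
    have hw'img : oneD (𝔾.r m) * u m ∈ β.act m '' α.D (𝔾.d m) :=
      ⟨z * oneD (𝔾.d m), hzD, hw'eq.symm⟩
    have hw'r : oneD (𝔾.r m) * u m ∈ α.D (𝔾.r m) :=
      (hDE (𝔾.r m) (hidr m)).mul_mem_right (honeD (𝔾.r m)).1 (humem m)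
    have hw'D : oneD (𝔾.r m) * u m ∈ α.D m := by
      rw [hcompatD m]; exact ⟨hw'r, hw'img⟩
    have e1 : oneD m * (oneD (𝔾.r m) * u m) = oneD (𝔾.r m) * u m :=
      ((honeD m).2 _ hw'D).1
    have e2 : oneD m * (oneD (𝔾.r m) * u m) = oneD m := by
      have hmm : oneD m ∈ α.D m := (honeD m).1
      have hmr : oneD m ∈ α.D (𝔾.r m) := (α.ideal m).subset hmm
      rw [← mul_assoc, ((honeD (𝔾.r m)).2 _ hmr).2]
      obtain ⟨-, y, hy, hyeq⟩ : oneD m ∈ α.D (𝔾.r m) ∩ (β.act m '' α.D (𝔾.d m)) := by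
        rw [← hcompatD m]; exact hmm
      have hyβ : y ∈ β.D (𝔾.d m) := hDsubβ (𝔾.d m) (hidd m) hy
      rw [hu_def, ← hyeq, ← hβmul m y hyβ _ (honeDd m), ((honeD (𝔾.d m)).2 y hy).2]
    rw [← e1, e2]
  -- β and α send the local identity oneD (inv g) to oneD g
  have halpha_one : ∀ g, α.act g (oneD (𝔾.inv g)) = oneD g := by
    intro g
    have hj : α.act g (oneD (𝔾.inv g)) ∈ α.D g := (α.bijOn g).mapsTo (honeD (𝔾.inv g)).1
    obtain ⟨y', hy', hy'eq⟩ := (α.bijOn g).surjOn (honeD g).1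
    have e1 : oneD g * α.act g (oneD (𝔾.inv g)) = α.act g (oneD (𝔾.inv g)) :=
      ((honeD g).2 _ hj).1
    have e2 : oneD g * α.act g (oneD (𝔾.inv g)) = oneD g := by
      rw [← hy'eq, ← α.map_mul g y' hy' _ (honeD (𝔾.inv g)).1,
        ((honeD (𝔾.inv g)).2 y' hy').2]
    rw [← e1, e2]
  have hβ_one : ∀ g, β.act g (oneD (𝔾.inv g)) = oneD g := fun g =>
    (hcompatAct g _ (honeD (𝔾.inv g)).1).trans (halpha_one g)
  -- centrality of u
  have hucent : ∀ p (t : T), u p * t = t * u p := by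
    intro p t
    have hgen : ∀ f, 𝔾.isId f → ∀ s ∈ β.D f, u p * s = s * u p := by
      intro f hf s hs
      rw [hspans f, hre f hf] at hs
      induction hs using AddSubgroup.closure_induction with
      | mem s hs =>
        simp only [Set.mem_iUnion, Set.mem_setOf_eq] at hs
        obtain ⟨k, hk, y, hy, rfl⟩ := hs
        by_cases hfp : f = 𝔾.r p
        · -- main computation
          subst hfp
          set m := 𝔾.mul (𝔾.inv k) p with hm_def
          have hc1 : 𝔾.d (𝔾.inv k) = 𝔾.r p := by rw [𝔾.d_inv, hk]
          have hrm : 𝔾.r m = 𝔾.d k := by rw [hm_def, 𝔾.r_mul' _ _ hc1, 𝔾.r_inv]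
          have hdm : 𝔾.d m = 𝔾.d p := by rw [hm_def, 𝔾.d_mul _ _ hc1]
          have hkm : 𝔾.mul k m = p := by rw [hm_def]; exact hginv_cancel k p hk.symm
          have humk : β.act k (β.act m (oneD (𝔾.d m))) = u p := by
            rw [hβcomp k m (by rw [hrm]) _ (by rw [hdm]; exact honeDd p), hkm, hu_def, hdm]
          have hwmem : β.act m (oneD (𝔾.d m)) ∈ β.D (𝔾.d k) := by
            have := hβmem m _ (honeDd m); rwa [hrm] at this
          have hyβ : y ∈ β.D (𝔾.d k) := hDsubβ (𝔾.d k) (hidd k) hy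
          have hwy : β.act m (oneD (𝔾.d m)) * y = y * β.act m (oneD (𝔾.d m)) := by
            have h1 : β.act m (oneD (𝔾.d m)) * y
                = β.act m (oneD (𝔾.d m)) * (oneD (𝔾.d k) * y) := by
              rw [((honeD (𝔾.d k)).2 y hy).1
            ]
            have key : oneD (𝔾.d k) * β.act m (oneD (𝔾.d m)) = oneD m := by
              have := honeL1 m; rwa [hrm, hu_def] at this
            calc β.act m (oneD (𝔾.d m)) * y
                = β.act m (oneD (𝔾.d m)) * (oneD (𝔾.d k) * y) := h1
              _ = (β.act m (oneD (𝔾.d m)) * oneD (𝔾.d k)) * y := by rw [mul_assoc]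
              _ = (oneD (𝔾.d k) * β.act m (oneD (𝔾.d m))) * y := by rw [← hcentD]
              _ = oneD m * y := by rw [key]
              _ = y * oneD m := hcentD m y
              _ = y * (oneD (𝔾.d k) * β.act m (oneD (𝔾.d m))) := by rw [key]
              _ = (y * oneD (𝔾.d k)) * β.act m (oneD (𝔾.d m)) := by rw [mul_assoc]
              _ = y * β.act m (oneD (𝔾.d m)) := by rw [((honeD (𝔾.d k)).2 y hy).2]
          rw [← humk, ← hβmul k _ hwmem y hyβ, hwy, hβmul k y hyβ _ hwmem]
        · -- orthogonal components
          have hfid : 𝔾.isId f := hf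
          have hkβ : β.act k y ∈ β.D f := by
            have := hβmem k y (hDsubβ (𝔾.d k) (hidd k) hy)
            rwa [hk] at this
          rw [horthE (𝔾.r p) f (hidr p) hfid (fun hE => hfp hE.symm) _ (humem p) _ hkβ,
            horthE f (𝔾.r p) hfid (hidr p) hfp _ hkβ _ (humem p)]
      | zero => simp
      | add a b ha hb iha ihb => rw [mul_add, add_mul, iha, ihb]
      | neg a ha iha => rw [mul_neg, neg_mul, iha]
    calc u p * t = u p * (t * 1) := by rw [mul_one]
      _ = ∑ f ∈ G₀, u p * (t * oneE f) := by
          rw [h1T, Finset.mul_sum, Finset.mul_sum]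
      _ = ∑ f ∈ G₀, (t * oneE f) * u p := by
          refine Finset.sum_congr rfl fun f hf => ?_
          exact hgen f ((hG0 f).mp hf) _ (hmulD t f (honeE f).1)
      _ = (t * 1) * u p := by rw [h1T, Finset.mul_sum, Finset.sum_mul]
      _ = t * u p := by rw [mul_one]

  -- separation / uniqueness
  have hsep : ∀ c : T, (∀ h, c * u h = 0) → c = 0 := by
    intro c hc
    have hcf : ∀ f, 𝔾.isId f → ∀ s ∈ β.D f, c * s = 0 := by
      intro f hf s hs
      rw [hspans f, hre f hf] at hs
      induction hs using AddSubgroup.closure_induction with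
      | mem s hs =>
        simp only [Set.mem_iUnion, Set.mem_setOf_eq] at hs
        obtain ⟨k, hk, y, hy, rfl⟩ := hs
        have hyβ : y ∈ β.D (𝔾.d k) := hDsubβ (𝔾.d k) (hidd k) hy
        have hkey : u k * β.act k y = β.act k y := by
          rw [hu_def, ← hβmul k _ (honeDd k) y hyβ, ((honeD (𝔾.d k)).2 y hy).1]
        rw [← hkey, ← mul_assoc, hc k, zero_mul]
      | zero => simp
      | add a b ha hb iha ihb => rw [mul_add, iha, ihb, add_zero]
      | neg a ha iha => rw [mul_neg, iha, neg_zero]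
    calc c = c * 1 := (mul_one c).symm
      _ = ∑ f ∈ G₀, c * oneE f := by rw [h1T, Finset.mul_sum]
      _ = 0 := Finset.sum_eq_zero fun f hf => hcf f ((hG0 f).mp hf) _ (honeE f).1
  have huniq : ∀ b b' : T, (∀ h, b * u h = b' * u h) → b = b' := by
    intro b b' hbb
    have h0 : b - b' = 0 := hsep _ fun h => by rw [sub_mul, hbb h, sub_self]
    exact sub_eq_zero.mp h0
  -- a * oneD g always lies in α.D g
  have haD : ∀ (a : T) (g : G), a * oneD g ∈ α.D g := by
    intro a g
    have h1 : oneD g ∈ β.D (𝔾.r g) := honeDmem g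
    have h2 : a * oneD g = (a * oneE (𝔾.r g)) * oneD g := by
      rw [mul_assoc]
      congr 1
      exact (((honeE (𝔾.r g)).2 _ h1).1).symm
    have h4 : a * oneD g ∈ α.D (𝔾.r g) := by
      rw [h2]
      exact (hDE (𝔾.r g) (hidr g)).mul_mem_left (hmulD a (𝔾.r g) (honeE (𝔾.r g)).1)
        ((α.ideal g).subset (honeD g).1)
    have h5 : a * oneD g = (a * oneD g) * oneD g := by rw [mul_assoc, honeD_idem]
    rw [h5]
    exact (α.ideal g).mul_mem_left h4 (honeD g).1
  -- step A of the patching condition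
  have hstepA : ∀ (x : T) (h k : G), 𝔾.r h = 𝔾.r k →
      v x h * u k = β.act h (x * oneD (𝔾.mul (𝔾.inv h) k)) := by
    intro x h k hr
    have hc1 : 𝔾.d (𝔾.inv h) = 𝔾.r k := by rw [𝔾.d_inv, hr]
    set m := 𝔾.mul (𝔾.inv h) k with hm_def
    have hrm : 𝔾.r m = 𝔾.d h := by rw [hm_def, 𝔾.r_mul' _ _ hc1, 𝔾.r_inv]
    have hdm : 𝔾.d m = 𝔾.d k := by rw [hm_def, 𝔾.d_mul _ _ hc1]
    have hhm : 𝔾.mul h m = k := by rw [hm_def]; exact hginv_cancel h k hr.symm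
    have huk : u k = β.act h (β.act m (oneD (𝔾.d m))) := by
      rw [hβcomp h m hrm.symm _ (honeDd m), hhm, hu_def, hdm]
    have hwmem : β.act m (oneD (𝔾.d m)) ∈ β.D (𝔾.d h) := by
      have := hβmem m _ (honeDd m); rwa [hrm] at this
    have hxmem : x * oneD (𝔾.d h) ∈ β.D (𝔾.d h) := hmulD x (𝔾.d h) (honeDd h)
    have hinner : (x * oneD (𝔾.d h)) * β.act m (oneD (𝔾.d m)) = x * oneD m := by
      rw [mul_assoc]
      congr 1
      have := honeL1 m
      rwa [hrm, hu_def] at this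
    rw [hv_def, huk, ← hβmul h _ hxmem _ hwmem, hinner]
  -- patching condition
  have hpatch : ∀ x ∈ Rα, ∀ h k, 𝔾.r h = 𝔾.r k → v x h * u k = v x k * u h := by
    intro x hx h k hr
    have hc1 : 𝔾.d (𝔾.inv h) = 𝔾.r k := by rw [𝔾.d_inv, hr]
    set m := 𝔾.mul (𝔾.inv h) k with hm_def
    have hrm : 𝔾.r m = 𝔾.d h := by rw [hm_def, 𝔾.r_mul' _ _ hc1, 𝔾.r_inv]
    have hdm : 𝔾.d m = 𝔾.d k := by rw [hm_def, 𝔾.d_mul _ _ hc1]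
    have hhm : 𝔾.mul h m = k := by rw [hm_def]; exact hginv_cancel h k hr.symm
    have hminv : 𝔾.inv m = 𝔾.mul (𝔾.inv k) h := by
      rw [hm_def, hinvmul (𝔾.inv h) k hc1, 𝔾.inv_inv]
    have hA1 : v x h * u k = β.act h (x * oneD m) := by
      rw [hstepA x h k hr, ← hm_def]
    have hA2 : v x k * u h = β.act k (x * oneD (𝔾.inv m)) := by
      rw [hstepA x k h hr.symm, ← hminv]
    have hxm : x * oneD (𝔾.inv m) ∈ α.D (𝔾.inv m) := haD x (𝔾.inv m)
    have hβm : β.act m (x * oneD (𝔾.inv m)) = x * oneD m := by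
      rw [hcompatAct m _ hxm]; exact hx.2 m
    have hxmβ : x * oneD (𝔾.inv m) ∈ β.D (𝔾.d m) := by
      have h1 : x * oneD (𝔾.inv m) ∈ α.D (𝔾.r (𝔾.inv m)) := (α.ideal (𝔾.inv m)).subset hxm
      rw [𝔾.r_inv] at h1
      exact hDsubβ (𝔾.d m) (hidd m) h1
    rw [hA1, hA2, ← hβm, hβcomp h m hrm.symm _ hxmβ, hhm]
  -- the glued elements
  set Xl : G → List G := fun e => (Finset.univ.filter (fun k => 𝔾.r k = e)).toList
    with hXl_def
  have hXl : ∀ e k, k ∈ Xl e ↔ 𝔾.r k = e := by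
    intro e k
    simp [hXl_def, Finset.mem_toList, Finset.mem_filter]
  set glue : G → T → T := fun e x => glueL (v x) u (oneE e) (Xl e) with hglue_def
  have hgluemem : ∀ e, 𝔾.isId e → ∀ x : T, glue e x ∈ β.D e := by
    intro e he x
    refine glueL_mem (v x) u (oneE e) (β.D e) (hIdl e).zero_mem
      (fun a ha b hb => (hIdl e).add_mem ha hb)
      (fun a ha t => (hIdl e).mul_mem_right ha (Set.mem_univ t)) (Xl e) ?_
    intro k hk
    have := hvmem x k
    rwa [(hXl e k).mp hk] at this
  have hglue_u : ∀ x ∈ Rα, ∀ e, 𝔾.isId e → ∀ k, 𝔾.r k = e → glue e x * u k = v x k := by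
    intro x hx e he k hk
    refine glueL_spec (v x) u (oneE e) hucent (Xl e) ?_ ?_ ?_ ?_ ?_ k ((hXl e k).mpr hk)
    · intro j hj
      exact ((honeE e).2 _ (by have := humem j; rwa [(hXl e j).mp hj] at this)).1
    · intro j _; exact hu_idem j
    · intro j _; exact hv_u x j
    · intro j hj
      exact ((honeE e).2 _ (by have := hvmem x j; rwa [(hXl e j).mp hj] at this)).2
    · intro a ha b hb
      exact hpatch x hx a b (by rw [(hXl e a).mp ha, (hXl e b).mp hb])
  have hA_u : ∀ x ∈ Rα, ∀ p, (∑ e ∈ G₀, glue e x) * u p = v x p := by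
    intro x hx p
    rw [Finset.sum_mul]
    rw [Finset.sum_eq_single_of_mem (𝔾.r p) ((hG0 (𝔾.r p)).mpr (hidr p))
      (fun e he hne => horthE e (𝔾.r p) ((hG0 e).mp he) (hidr p) hne _
        (hgluemem e ((hG0 e).mp he) x) _ (humem p))]
    exact hglue_u x hx (𝔾.r p) (hidr p) p rfl
  -- facts about oneR
  have honeR_z : ∀ f, 𝔾.isId f → ∀ z ∈ β.D f, oneR * z = oneD f * z := by
    intro f hf z hz
    show (∑ e ∈ G₀, oneD e) * z = oneD f * z
    rw [Finset.sum_mul]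
    exact Finset.sum_eq_single_of_mem f ((hG0 f).mpr hf)
      (fun e he hne => horthE e f ((hG0 e).mp he) hf hne _ (honeDid e ((hG0 e).mp he)) z hz)
  have honeR_oneD : ∀ g, oneR * oneD g = oneD g := by
    intro g
    rw [honeR_z (𝔾.r g) (hidr g) _ (honeDmem g)]
    exact ((honeD (𝔾.r g)).2 _ ((α.ideal g).subset (honeD g).1)).1
  have honeR_idem : oneR * oneR = oneR := by
    show oneR * ∑ e ∈ G₀, oneD e = ∑ e ∈ G₀, oneD e
    rw [Finset.mul_sum]
    exact Finset.sum_congr rfl fun e _ => honeR_oneD e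
  have hR_oneR : ∀ x ∈ Rset, x * oneR = x := by
    intro x hx
    rw [hRset] at hx
    obtain ⟨t, rfl⟩ := hx
    show t * oneR * oneR = t * oneR
    rw [mul_assoc, honeR_idem]
  have honeRabs : ∀ (a : T) (g : G), (a * oneR) * oneD g = a * oneD g := by
    intro a g; rw [mul_assoc, honeR_oneD g]
  have hu_id : ∀ f, 𝔾.isId f → u f = oneD f := by
    intro f hf
    show β.act f (oneD (𝔾.d f)) = oneD f
    rw [hf]
    exact β.act_id f hf _ (honeDid f hf)
  -- ψ x * oneR = x
  have hψR : ∀ x ∈ Rα, (∑ e ∈ G₀, glue e x) * oneR = x := by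
    intro x hx
    show (∑ e ∈ G₀, glue e x) * (∑ f ∈ G₀, oneD f) = x
    rw [Finset.mul_sum]
    have hterm : ∀ f ∈ G₀, (∑ e ∈ G₀, glue e x) * oneD f = x * oneD f := by
      intro f hf
      have hfid := (hG0 f).mp hf
      have h1 : (∑ e ∈ G₀, glue e x) * oneD f = v x f := by
        rw [← hu_id f hfid]; exact hA_u x hx f
      rw [h1]
      show β.act f (x * oneD (𝔾.d f)) = x * oneD f
      rw [hfid]
      exact β.act_id f hfid _ (hmulD x f (honeDid f hfid))
    rw [Finset.sum_congr rfl hterm, ← Finset.mul_sum]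
    exact hR_oneR x hx.1
  -- components of ψ
  have hψE : ∀ x : T, ∀ f, 𝔾.isId f → (∑ e ∈ G₀, glue e x) * oneE f = glue f x := by
    intro x f hf
    rw [Finset.sum_mul]
    rw [Finset.sum_eq_single_of_mem f ((hG0 f).mpr hf)
      (fun e he hne => horthE e f ((hG0 e).mp he) hf hne _ (hgluemem e ((hG0 e).mp he) x)
        _ (honeE f).1)]
    exact ((honeE f).2 _ (hgluemem f hf x)).2
  -- ψ maps Rα into Tβ
  have hmaps : ∀ x ∈ Rα, (∑ e ∈ G₀, glue e x) ∈ Tβ := by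
    intro x hx
    show ∀ g, β.act g ((∑ e ∈ G₀, glue e x) * oneE (𝔾.d g))
      = (∑ e ∈ G₀, glue e x) * oneE (𝔾.r g)
    intro g
    rw [hψE x (𝔾.d g) (hidd g), hψE x (𝔾.r g) (hidr g)]
    refine huniq _ _ fun p => ?_
    by_cases hp : 𝔾.r p = 𝔾.r g
    · have hc1 : 𝔾.d (𝔾.inv g) = 𝔾.r p := by rw [𝔾.d_inv, hp]
      set k := 𝔾.mul (𝔾.inv g) p with hk_def
      have hkr : 𝔾.r k = 𝔾.d g := by rw [hk_def, 𝔾.r_mul' _ _ hc1, 𝔾.r_inv]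
      have hkd : 𝔾.d k = 𝔾.d p := by rw [hk_def, 𝔾.d_mul _ _ hc1]
      have hgk : 𝔾.mul g k = p := by rw [hk_def]; exact hginv_cancel g p hp
      have hup : β.act g (u k) = u p := by
        show β.act g (β.act k (oneD (𝔾.d k))) = u p
        rw [hβcomp g k hkr.symm _ (honeDd k), hgk, hkd, hu_def]
      have hgluedg : glue (𝔾.d g) x ∈ β.D (𝔾.d g) := hgluemem (𝔾.d g) (hidd g) x
      have hukmem : u k ∈ β.D (𝔾.d g) := by have := humem k; rwa [hkr] at this
      have hL : β.act g (glue (𝔾.d g) x) * u p = v x p := by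
        rw [← hup, ← hβmul g _ hgluedg _ hukmem, hglue_u x hx (𝔾.d g) (hidd g) k hkr]
        show β.act g (β.act k (x * oneD (𝔾.d k))) = v x p
        rw [hβcomp g k hkr.symm _ (hmulD x (𝔾.d k) (honeDd k)), hgk, hkd, hv_def]
      rw [hL, hglue_u x hx (𝔾.r g) (hidr g) p hp]
    · have h1 : β.act g (glue (𝔾.d g) x) ∈ β.D (𝔾.r g) :=
        hβmem g _ (hgluemem (𝔾.d g) (hidd g) x)
      rw [horthE (𝔾.r g) (𝔾.r p) (hidr g) (hidr p) (fun hE => hp hE.symm) _ h1 _ (humem p),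
        horthE (𝔾.r g) (𝔾.r p) (hidr g) (hidr p) (fun hE => hp hE.symm) _
          (hgluemem (𝔾.r g) (hidr g) x) _ (humem p)]
  -- closure of Rα under + and *
  have hRset_add : ∀ x ∈ Rset, ∀ y ∈ Rset, x + y ∈ Rset := by
    intro x hx y hy
    rw [hRset] at hx hy ⊢
    obtain ⟨s, rfl⟩ := hx; obtain ⟨t, rfl⟩ := hy
    exact ⟨s + t, by rw [add_mul]⟩
  have hRset_mulR : ∀ (t : T), t * oneR ∈ Rset := by
    intro t; rw [hRset]; exact ⟨t, rfl⟩
  have hsplit : ∀ (a b : T) (w : G), (a * b) * oneD w = (a * oneD w) * (b * oneD w) := by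
    intro a b w
    calc (a * b) * oneD w = a * (b * (oneD w * oneD w)) := by rw [honeD_idem, mul_assoc]
      _ = a * ((b * oneD w) * oneD w) := by rw [mul_assoc]
      _ = a * ((oneD w * b) * oneD w) := by rw [hcentD w b]
      _ = (a * oneD w) * (b * oneD w) := by rw [mul_assoc, mul_assoc]
  have hRα_add : ∀ x ∈ Rα, ∀ y ∈ Rα, x + y ∈ Rα := by
    intro x hx y hy
    refine ⟨hRset_add x hx.1 y hy.1, fun g => ?_⟩
    rw [add_mul, α.map_add g _ (haD x (𝔾.inv g)) _ (haD y (𝔾.inv g)), hx.2 g, hy.2 g,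
      add_mul]
  have hRα_mul : ∀ x ∈ Rα, ∀ y ∈ Rα, x * y ∈ Rα := by
    intro x hx y hy
    have hmemR : x * y ∈ Rset := by
      have hy1 := hy.1
      rw [hRset] at hy1 ⊢
      obtain ⟨t, rfl⟩ := hy1
      exact ⟨x * t, by rw [mul_assoc]⟩
    refine ⟨hmemR, fun g => ?_⟩
    rw [hsplit x y (𝔾.inv g), α.map_mul g _ (haD x (𝔾.inv g)) _ (haD y (𝔾.inv g)),
      hx.2 g, hy.2 g, ← hsplit x y g]
  -- Tβ-elements restricted to R
  have hTβ_Rα : ∀ a ∈ Tβ, a * oneR ∈ Rα := by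
    intro a ha
    refine ⟨hRset_mulR a, fun g => ?_⟩
    rw [honeRabs a (𝔾.inv g), honeRabs a g]
    have hamem : a * oneD (𝔾.inv g) ∈ α.D (𝔾.inv g) := haD a (𝔾.inv g)
    rw [← hcompatAct g _ hamem]
    have h1 : oneD (𝔾.inv g) ∈ β.D (𝔾.d g) := by
      have := honeDmem (𝔾.inv g); rwa [𝔾.r_inv] at this
    have key : a * oneD (𝔾.inv g) = (a * oneE (𝔾.d g)) * oneD (𝔾.inv g) := by
      rw [mul_assoc]; congr 1; exact (((honeE (𝔾.d g)).2 _ h1).1).symm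
    rw [key, hβmul g _ (hmulD a (𝔾.d g) (honeE (𝔾.d g)).1) _ h1, ha g, hβ_one g,
      mul_assoc, ((honeE (𝔾.r g)).2 _ (honeDmem g)).1]
  have hTβ_u : ∀ a ∈ Tβ, ∀ p, a * u p = v (a * oneR) p := by
    intro a ha p
    have h2 : oneD (𝔾.d p) ∈ β.D (𝔾.d p) := honeDd p
    calc a * u p = a * (oneE (𝔾.r p) * u p) := by
          rw [((honeE (𝔾.r p)).2 _ (humem p)).1]
      _ = (a * oneE (𝔾.r p)) * u p := by rw [mul_assoc]
      _ = β.act p (a * oneE (𝔾.d p)) * β.act p (oneD (𝔾.d p)) := by rw [← ha p, hu_def]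
      _ = β.act p ((a * oneE (𝔾.d p)) * oneD (𝔾.d p)) := by
          rw [← hβmul p _ (hmulD a (𝔾.d p) (honeE (𝔾.d p)).1) _ h2]
      _ = β.act p (a * oneD (𝔾.d p)) := by
          rw [mul_assoc, ((honeE (𝔾.d p)).2 _ h2).1]
      _ = β.act p ((a * oneR) * oneD (𝔾.d p)) := by rw [honeRabs]
      _ = v (a * oneR) p := by rw [hv_def]
  have hback : ∀ a ∈ Tβ, (∑ e ∈ G₀, glue e (a * oneR)) = a := by
    intro a ha
    refine huniq _ _ fun p => ?_
    rw [hA_u _ (hTβ_Rα a ha) p, ← hTβ_u a ha p]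
  have hv_add : ∀ (x y : T) (p : G), v (x + y) p = v x p + v y p := by
    intro x y p
    show β.act p ((x + y) * oneD (𝔾.d p)) = v x p + v y p
    rw [add_mul, hβadd p _ (hmulD x (𝔾.d p) (honeDd p)) _ (hmulD y (𝔾.d p) (honeDd p)),
      hv_def]
  have hv_mul : ∀ (x y : T) (p : G), v x p * v y p = v (x * y) p := by
    intro x y p
    show β.act p (x * oneD (𝔾.d p)) * β.act p (y * oneD (𝔾.d p)) = v (x * y) p
    rw [← hβmul p _ (hmulD x (𝔾.d p) (honeDd p)) _ (hmulD y (𝔾.d p) (honeDd p)),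
      ← hsplit, hv_def]
  have honeR_Rα : oneR ∈ Rα := by
    refine ⟨by rw [hRset]; exact ⟨1, (one_mul _).symm⟩, fun g => ?_⟩
    rw [honeR_oneD (𝔾.inv g), honeR_oneD g, halpha_one g]
  -- assemble
  refine ⟨fun x => ∑ e ∈ G₀, glue e x, ⟨fun x hx => hmaps x hx, ?_, ?_⟩, ?_, ?_, ?_, ?_⟩
  · -- injective
    intro x hx y hy hxy
    have : (∑ e ∈ G₀, glue e x) * oneR = (∑ e ∈ G₀, glue e y) * oneR := by
      simp only at hxy
      rw [hxy]
    rwa [hψR x hx, hψR y hy] at this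
  · -- surjective
    intro a ha
    exact ⟨a * oneR, hTβ_Rα a ha, hback a ha⟩
  · -- ring hom on Rα
    intro x hx y hy
    constructor
    · refine huniq _ _ fun p => ?_
      rw [hA_u _ (hRα_add x hx y hy) p, hv_add x y p, add_mul, hA_u x hx p, hA_u y hy p]
    · refine huniq _ _ fun p => ?_
      rw [hA_u _ (hRα_mul x hx y hy) p, ← hv_mul x y p, mul_assoc, hA_u y hy p,
        ← hu_v y p, ← mul_assoc, ← mul_assoc, hA_u x hx p, hv_u x p]
  · -- ψ oneR = 1
    refine huniq _ _ fun p => ?_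
    rw [hA_u _ honeR_Rα p, one_mul]
    show β.act p (oneR * oneD (𝔾.d p)) = u p
    rw [honeR_oneD (𝔾.d p), hu_def]
  · -- ψ x * oneR = x
    exact fun x hx => hψR x hx
  · -- ψ (a * oneR) = a
    exact fun a ha => hback a ha
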